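/- Let K be a field and V a 2-dimensional subspace of a K-vector space spanned by two distinct monomials m1, m2 from a basis of monomials of A(2^n) in the free algebra A = K⟨x,y⟩. Then A(2^{n+1}) = A(2^n)A(2^n) decomposes as a direct sum U(2^n)U(2^n) ⊕ U(2^n)V ⊕ V U(2^n) ⊕ m1 V ⊕ m2 V, whenever A(2^n) = U(2^n) ⊕ V. -/

import Mathlib

open Polynomial in
/-- A monomial of degree `n` in the free algebra `K⟨x,y⟩` (on generators
indexed by `Fin 2`, with `0 ↦ x` and `1 ↦ y`), given by a word `f`. -/
noncomputable def mono (K : Type*) [Field K] {n : ℕ} (f : Fin n → Fin 2) :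
    FreeAlgebra K (Fin 2) :=
  (List.ofFn fun k => FreeAlgebra.ι K (f k)).prod

/-- `w K n i` is the sum of all monomials of degree `n` in `x, y` with exactly
`i` occurrences of `x`. -/
noncomputable def w (K : Type*) [Field K] (n i : ℕ) : FreeAlgebra K (Fin 2) :=
  ∑ f ∈ Finset.univ.filter
      (fun f : Fin n → Fin 2 => (Finset.univ.filter fun k => f k = 0).card = i),
    mono K f

/-- The span of the monomials of degree `n` in the free algebra `K⟨x,y⟩`. -/
noncomputable def Adeg (K : Type*) [Field K] (n : ℕ) :
    Submodule K (FreeAlgebra K (Fin 2)) :=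
  Submodule.span K (Set.range (mono K (n := n)))

section Aux

open Pointwise

variable {K : Type*} [Field K]

lemma e_prod_map (l : List (Fin 2)) :
    FreeAlgebra.equivMonoidAlgebraFreeMonoid (R := K) (X := Fin 2)
        ((l.map (FreeAlgebra.ι K)).prod)
      = MonoidAlgebra.single (FreeMonoid.ofList l) 1 := by
  induction l with
  | nil =>
    simp only [List.map_nil, List.prod_nil, map_one]
    rw [MonoidAlgebra.one_def]
    rfl
  | cons a l ih =>
    rw [List.map_cons, List.prod_cons, map_mul, ih]
    have ha : FreeAlgebra.equivMonoidAlgebraFreeMonoid (R := K) (X := Fin 2)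
        (FreeAlgebra.ι K a) = MonoidAlgebra.single (FreeMonoid.of a) 1 := by
      simp [FreeAlgebra.equivMonoidAlgebraFreeMonoid, MonoidAlgebra.of_apply]
    rw [ha, MonoidAlgebra.single_mul_single, one_mul]
    rfl

lemma basis_apply_eq (x : FreeMonoid (Fin 2)) :
    FreeAlgebra.basisFreeMonoid K (Fin 2) x
      = (FreeAlgebra.equivMonoidAlgebraFreeMonoid (R := K) (X := Fin 2)).symm
          (MonoidAlgebra.single x 1) := by
  simp only [FreeAlgebra.basisFreeMonoid, Module.Basis.map_apply]
  rfl

lemma prod_map_eq_basis (l : List (Fin 2)) :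
    (l.map (FreeAlgebra.ι K)).prod
      = FreeAlgebra.basisFreeMonoid K (Fin 2) (FreeMonoid.ofList l) := by
  rw [basis_apply_eq, ← e_prod_map, AlgEquiv.symm_apply_apply]

lemma mono_eq_prod_map {n : ℕ} (f : Fin n → Fin 2) :
    mono K f = ((List.ofFn f).map (FreeAlgebra.ι K)).prod := by
  unfold mono
  rw [List.map_ofFn]
  rfl

lemma mono_eq_basis {n : ℕ} (f : Fin n → Fin 2) :
    mono K f = FreeAlgebra.basisFreeMonoid K (Fin 2)
        (FreeMonoid.ofList (List.ofFn f)) := by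
  rw [mono_eq_prod_map, prod_map_eq_basis]

lemma mono_mul_basis {N : ℕ} (f g : Fin N → Fin 2) :
    mono K f * mono K g
      = FreeAlgebra.basisFreeMonoid K (Fin 2)
          (FreeMonoid.ofList (List.ofFn f ++ List.ofFn g)) := by
  rw [mono_eq_prod_map, mono_eq_prod_map, ← List.prod_append, ← List.map_append,
    prod_map_eq_basis]

lemma mono_mul_mono {N M : ℕ} (hM : M = N + N) (f g : Fin N → Fin 2) :
    mono K f * mono K g
      = mono K (fun k : Fin M => Fin.append f g (Fin.cast hM k)) := by
  rw [mono_mul_basis, mono_eq_basis]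
  congr 2
  rw [← List.ofFn_fin_append, List.ofFn_congr hM.symm (Fin.append f g)]

lemma mono_split {N M : ℕ} (hM : M = N + N) (h : Fin M → Fin 2) :
    ∃ f g : Fin N → Fin 2, mono K h = mono K f * mono K g := by
  refine ⟨fun k => h (Fin.cast hM.symm (Fin.castAdd N k)),
    fun k => h (Fin.cast hM.symm (Fin.natAdd N k)), ?_⟩
  rw [mono_mul_mono hM]
  congr 1
  funext k
  have key : ∀ j : Fin (N + N),
      Fin.append (fun k => h (Fin.cast hM.symm (Fin.castAdd N k)))
        (fun k => h (Fin.cast hM.symm (Fin.natAdd N k))) j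
        = h (Fin.cast hM.symm j) := by
    intro j
    induction j using Fin.addCases with
    | left i => rw [Fin.append_left]
    | right i => rw [Fin.append_right]
  rw [key]
  exact congrArg h (Fin.ext (by simp))

lemma adeg_mul_adeg {N M : ℕ} (hM : M = N + N) :
    Adeg K N * Adeg K N = Adeg K M := by
  have hset : (Set.range (mono K (n := N)) * Set.range (mono K (n := N)))
      = Set.range (mono K (n := M)) := by
    ext z
    constructor
    · rintro ⟨a, ⟨f, rfl⟩, b, ⟨g, rfl⟩, rfl⟩
      exact ⟨_, (mono_mul_mono hM f g).symm⟩
    · rintro ⟨h, rfl⟩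
      obtain ⟨f, g, hfg⟩ := mono_split (K := K) hM h
      exact ⟨_, ⟨f, rfl⟩, _, ⟨g, rfl⟩, hfg.symm⟩
  unfold Adeg
  rw [Submodule.span_mul_span, hset]

/-- The splitting linear map `A → A ⊗ A` sending a word of length `N + N`
to (first half) ⊗ (second half), and other words to `0`. -/
noncomputable def PhiMap (K : Type*) [Field K] (N : ℕ) :
    FreeAlgebra K (Fin 2) →ₗ[K]
      TensorProduct K (FreeAlgebra K (Fin 2)) (FreeAlgebra K (Fin 2)) :=
  (FreeAlgebra.basisFreeMonoid K (Fin 2)).constr K fun ℓ =>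
    if (FreeMonoid.toList ℓ).length = N + N then
      (FreeAlgebra.basisFreeMonoid K (Fin 2))
          (FreeMonoid.ofList ((FreeMonoid.toList ℓ).take N)) ⊗ₜ[K]
        (FreeAlgebra.basisFreeMonoid K (Fin 2))
          (FreeMonoid.ofList ((FreeMonoid.toList ℓ).drop N))
    else 0

lemma PhiMap_mono_mul {N : ℕ} (f g : Fin N → Fin 2) :
    PhiMap K N (mono K f * mono K g) = mono K f ⊗ₜ[K] mono K g := by
  rw [mono_mul_basis, PhiMap, Module.Basis.constr_basis]
  rw [FreeMonoid.toList_ofList]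
  rw [if_pos (by simp)]
  rw [List.take_left' (by simp), List.drop_left' (by simp)]
  rw [← mono_eq_basis, ← mono_eq_basis]

lemma PhiMap_mul {N : ℕ} {x y : FreeAlgebra K (Fin 2)}
    (hx : x ∈ Adeg K N) (hy : y ∈ Adeg K N) :
    PhiMap K N (x * y) = x ⊗ₜ[K] y := by
  have key : ∀ g : Fin N → Fin 2, ∀ x ∈ Adeg K N,
      PhiMap K N (x * mono K g) = x ⊗ₜ[K] mono K g := by
    intro g x hx
    induction hx using Submodule.span_induction with
    | mem z hz => obtain ⟨f, rfl⟩ := hz; exact PhiMap_mono_mul f g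
    | zero => simp
    | add a b _ _ ha hb => rw [add_mul, map_add, ha, hb, TensorProduct.add_tmul]
    | smul c a _ ha => rw [smul_mul_assoc, map_smul, ha, TensorProduct.smul_tmul']
  induction hy using Submodule.span_induction with
  | mem z hz => obtain ⟨g, rfl⟩ := hz; exact key g x hx
  | zero => simp
  | add a b _ _ ha hb => rw [mul_add, map_add, ha, hb, TensorProduct.tmul_add]
  | smul c a _ ha => rw [mul_smul_comm, map_smul, ha, TensorProduct.tmul_smul]

/-- Projection onto a subspace `X`, vanishing on a subspace `Y` disjoint from it. -/
lemma exists_proj (X Y : Submodule K (FreeAlgebra K (Fin 2))) (h : Disjoint X Y) :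
    ∃ p : FreeAlgebra K (Fin 2) →ₗ[K] FreeAlgebra K (Fin 2),
      (∀ x ∈ X, p x = x) ∧ (∀ y ∈ Y, p y = 0) := by
  obtain ⟨W, hW⟩ := Submodule.exists_isCompl (X ⊔ Y)
  have hc : IsCompl X (Y ⊔ W) := by
    constructor
    · rw [Submodule.disjoint_def]
      intro a haX haYW
      obtain ⟨y, hy, w, hw, rfl⟩ := Submodule.mem_sup.mp haYW
      have hwXY : w ∈ X ⊔ Y := by
        have h1 : (y + w) - y ∈ X ⊔ Y :=
          Submodule.sub_mem _ (Submodule.mem_sup_left haX) (Submodule.mem_sup_right hy)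
        simpa using h1
      have hw0 : w = 0 := Submodule.disjoint_def.mp hW.disjoint w hwXY hw
      subst hw0
      rw [add_zero] at haX ⊢
      exact Submodule.disjoint_def.mp h y haX hy
    · rw [codisjoint_iff, ← sup_assoc, ← codisjoint_iff]
      exact hW.codisjoint
  refine ⟨X.subtype ∘ₗ (X.projectionOnto _ hc), fun x hx => ?_, fun y hy => ?_⟩
  · show ↑(X.projectionOnto _ hc x) = x
    rw [show x = ((⟨x, hx⟩ : X) : FreeAlgebra K (Fin 2)) from rfl,
      Submodule.projectionOnto_apply_left]
  · show ↑(X.projectionOnto _ hc y) = (0 : FreeAlgebra K (Fin 2))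
    rw [Submodule.projectionOnto_apply_of_mem_right hc (Submodule.mem_sup_left hy)]
    rfl

/-- Composite map `a ↦ mul (p ⊗ q) (Φ a)`. -/
noncomputable def PiMap (K : Type*) [Field K] (N : ℕ)
    (p q : FreeAlgebra K (Fin 2) →ₗ[K] FreeAlgebra K (Fin 2)) :
    FreeAlgebra K (Fin 2) →ₗ[K] FreeAlgebra K (Fin 2) :=
  LinearMap.mul' K _ ∘ₗ TensorProduct.map p q ∘ₗ PhiMap K N

lemma PiMap_mul {N : ℕ} (p q : FreeAlgebra K (Fin 2) →ₗ[K] FreeAlgebra K (Fin 2))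
    {x y : FreeAlgebra K (Fin 2)} (hx : x ∈ Adeg K N) (hy : y ∈ Adeg K N) :
    PiMap K N p q (x * y) = p x * q y := by
  simp [PiMap, PhiMap_mul hx hy]

lemma mul_le_ker {N : ℕ} (p q : FreeAlgebra K (Fin 2) →ₗ[K] FreeAlgebra K (Fin 2))
    (X Y : Submodule K (FreeAlgebra K (Fin 2)))
    (hX : X ≤ Adeg K N) (hY : Y ≤ Adeg K N)
    (h : (∀ x ∈ X, p x = 0) ∨ (∀ y ∈ Y, q y = 0)) :
    X * Y ≤ LinearMap.ker (PiMap K N p q) := by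
  rw [Submodule.mul_le]
  intro x hx y hy
  rw [LinearMap.mem_ker, PiMap_mul p q (hX hx) (hY hy)]
  rcases h with h | h
  · rw [h x hx, zero_mul]
  · rw [h y hy, mul_zero]

lemma PiMap_id_on {N : ℕ} (p q : FreeAlgebra K (Fin 2) →ₗ[K] FreeAlgebra K (Fin 2))
    (X Y : Submodule K (FreeAlgebra K (Fin 2)))
    (hX : X ≤ Adeg K N) (hY : Y ≤ Adeg K N)
    (hp : ∀ x ∈ X, p x = x) (hq : ∀ y ∈ Y, q y = y) :
    ∀ z ∈ X * Y, PiMap K N p q z = z := by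
  have hker : X * Y ≤ LinearMap.ker (PiMap K N p q - LinearMap.id) := by
    rw [Submodule.mul_le]
    intro x hx y hy
    rw [LinearMap.mem_ker, LinearMap.sub_apply, PiMap_mul p q (hX hx) (hY hy),
      hp x hx, hq y hy, LinearMap.id_apply, sub_self]
  intro z hz
  have h2 := hker hz
  rw [LinearMap.mem_ker, LinearMap.sub_apply, LinearMap.id_apply, sub_eq_zero] at h2
  exact h2

lemma smul_mono_cancel {N : ℕ} {f g : Fin N → Fin 2}
    (hne : mono K f ≠ mono K g) {c d : K}
    (h : c • mono K f = d • mono K g) : c = 0 := by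
  have hfg : FreeMonoid.ofList (List.ofFn f) ≠ FreeMonoid.ofList (List.ofFn g) := by
    intro he
    exact hne (by rw [mono_eq_basis, mono_eq_basis, he])
  have h2 := congrArg (fun z => (FreeAlgebra.basisFreeMonoid K (Fin 2)).repr z
      (FreeMonoid.ofList (List.ofFn f))) h
  simp only [mono_eq_basis, map_smul, Module.Basis.repr_self, Finsupp.smul_apply,
    smul_eq_mul] at h2
  rw [Finsupp.single_eq_same, Finsupp.single_eq_of_ne' (Ne.symm hfg), mul_one,
    mul_zero] at h2
  exact h2

end Aux

/-- If `A(2^n) = U ⊕ V` with `V` spanned by two distinct monomials `m1, m2`,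
then `A(2^{n+1}) = UU ⊕ UV ⊕ VU ⊕ m1V ⊕ m2V`. -/
theorem decomposition_of_square {K : Type*} [Field K] (n : ℕ)
    (U V : Submodule K (FreeAlgebra K (Fin 2)))
    (m1 m2 : FreeAlgebra K (Fin 2))
    (hm1 : ∃ f : Fin (2 ^ n) → Fin 2, m1 = mono K f)
    (hm2 : ∃ f : Fin (2 ^ n) → Fin 2, m2 = mono K f)
    (hne : m1 ≠ m2)
    (hV : V = Submodule.span K {m1, m2})
    (hsum : U ⊔ V = Adeg K (2 ^ n))
    (hdisj : U ⊓ V = ⊥) :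
    (⨆ i, ![U * U, U * V, V * U, Submodule.span K {m1} * V,
        Submodule.span K {m2} * V] i) = Adeg K (2 ^ (n + 1)) ∧
      iSupIndep ![U * U, U * V, V * U, Submodule.span K {m1} * V,
        Submodule.span K {m2} * V] := by
  set N := 2 ^ n with hN
  have hM : 2 ^ (n + 1) = N + N := by rw [pow_succ, mul_two]
  set s1 := Submodule.span K {m1} with hs1
  set s2 := Submodule.span K {m2} with hs2
  set F : Fin 5 → Submodule K (FreeAlgebra K (Fin 2)) :=
    ![U * U, U * V, V * U, s1 * V, s2 * V] with hF
  obtain ⟨f1, hf1⟩ := hm1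
  obtain ⟨f2, hf2⟩ := hm2
  have hUle : U ≤ Adeg K N := le_sup_left.trans hsum.le
  have hVle : V ≤ Adeg K N := le_sup_right.trans hsum.le
  have hs1V : s1 ≤ V := by
    rw [hV, hs1]
    exact Submodule.span_mono (by simp)
  have hs2V : s2 ≤ V := by
    rw [hV, hs2]
    exact Submodule.span_mono (by simp)
  have hs1le : s1 ≤ Adeg K N := hs1V.trans hVle
  have hs2le : s2 ≤ Adeg K N := hs2V.trans hVle
  have hVsup : V = s1 ⊔ s2 := by rw [hV, Submodule.span_insert]
  have hm1V : m1 ∈ V := hs1V (Submodule.mem_span_singleton_self m1)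
  have hm2V : m2 ∈ V := hs2V (Submodule.mem_span_singleton_self m2)
  have hdisjUV : Disjoint U V := disjoint_iff.mpr hdisj
  have hdisjVU : Disjoint V U := hdisjUV.symm
  -- disjointness for the one-dimensional pieces
  have hchase : ∀ a b : FreeAlgebra K (Fin 2),
      (∀ c d : K, c • a = d • b → c = 0) → a ∈ V → b ∈ V →
      Disjoint (Submodule.span K {a}) (Submodule.span K {b} ⊔ U) := by
    intro a b hcd haV hbV
    rw [Submodule.disjoint_def]
    intro z hz hzY
    obtain ⟨c, rfl⟩ := Submodule.mem_span_singleton.mp hz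
    obtain ⟨y, hy, u, hu, hyu⟩ := Submodule.mem_sup.mp hzY
    obtain ⟨d, rfl⟩ := Submodule.mem_span_singleton.mp hy
    have hsub : c • a - d • b = u := by rw [← hyu]; abel
    have hmem : c • a - d • b ∈ V :=
      Submodule.sub_mem V (Submodule.smul_mem _ _ haV) (Submodule.smul_mem _ _ hbV)
    have h0 : c • a - d • b = 0 := by
      have h2 : c • a - d • b ∈ U ⊓ V := ⟨hsub ▸ hu, hmem⟩
      rw [hdisj] at h2
      exact h2
    rw [hcd c d (sub_eq_zero.mp h0), zero_smul]
  have hd1 : Disjoint s1 (s2 ⊔ U) := by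
    refine hchase m1 m2 ?_ hm1V hm2V
    intro c d h
    exact smul_mono_cancel (f := f1) (g := f2) (by rw [← hf1, ← hf2]; exact hne)
      (by rw [← hf1, ← hf2]; exact h)
  have hd2 : Disjoint s2 (s1 ⊔ U) := by
    refine hchase m2 m1 ?_ hm2V hm1V
    intro c d h
    exact smul_mono_cancel (f := f2) (g := f1) (by rw [← hf1, ← hf2]; exact hne.symm)
      (by rw [← hf1, ← hf2]; exact h)
  -- the projections
  obtain ⟨pU, hpU_id, hpU_V⟩ := exists_proj U V hdisjUV
  obtain ⟨pV, hpV_id, hpV_U⟩ := exists_proj V U hdisjVU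
  obtain ⟨p1, hp1_id, hp1_0⟩ := exists_proj s1 (s2 ⊔ U) hd1
  obtain ⟨p2, hp2_id, hp2_0⟩ := exists_proj s2 (s1 ⊔ U) hd2
  have hpU_s1 : ∀ x ∈ s1, pU x = 0 := fun x hx => hpU_V x (hs1V hx)
  have hpU_s2 : ∀ x ∈ s2, pU x = 0 := fun x hx => hpU_V x (hs2V hx)
  have hpV_s1 : ∀ x ∈ s1, pV x = x := fun x hx => hpV_id x (hs1V hx)
  have hpV_s2 : ∀ x ∈ s2, pV x = x := fun x hx => hpV_id x (hs2V hx)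
  have hp1_s2 : ∀ x ∈ s2, p1 x = 0 := fun x hx => hp1_0 x (Submodule.mem_sup_left hx)
  have hp1_U : ∀ x ∈ U, p1 x = 0 := fun x hx => hp1_0 x (Submodule.mem_sup_right hx)
  have hp2_s1 : ∀ x ∈ s1, p2 x = 0 := fun x hx => hp2_0 x (Submodule.mem_sup_left hx)
  have hp2_U : ∀ x ∈ U, p2 x = 0 := fun x hx => hp2_0 x (Submodule.mem_sup_right hx)
  constructor
  · -- the sup equality
    have h5 : (⨆ i, F i) = (U * U ⊔ U * V) ⊔ (V * U ⊔ (s1 * V ⊔ s2 * V)) := by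
      apply le_antisymm
      · apply iSup_le
        intro i
        fin_cases i
        · exact le_sup_of_le_left le_sup_left
        · exact le_sup_of_le_left le_sup_right
        · exact le_sup_of_le_right le_sup_left
        · exact le_sup_of_le_right (le_sup_of_le_right le_sup_left)
        · exact le_sup_of_le_right (le_sup_of_le_right le_sup_right)
      · refine sup_le (sup_le ?_ ?_) (sup_le ?_ (sup_le ?_ ?_))
        · exact le_iSup F 0
        · exact le_iSup F 1
        · exact le_iSup F 2
        · exact le_iSup F 3
        · exact le_iSup F 4
    have hVV : V * V = s1 * V ⊔ s2 * V := by
      nth_rewrite 1 [hVsup]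
      rw [Submodule.sup_mul]
    rw [h5, ← hVV]
    have : (U * U ⊔ U * V) ⊔ (V * U ⊔ V * V) = (U ⊔ V) * (U ⊔ V) := by
      rw [Submodule.sup_mul, Submodule.mul_sup, Submodule.mul_sup]
    rw [this, hsum, adeg_mul_adeg hM]
  · -- independence
    intro i
    have key : ∃ π : FreeAlgebra K (Fin 2) →ₗ[K] FreeAlgebra K (Fin 2),
        (∀ z ∈ F i, π z = z) ∧ ∀ j, j ≠ i → F j ≤ LinearMap.ker π := by
      fin_cases i
      · refine ⟨PiMap K N pU pU,
          PiMap_id_on pU pU U U hUle hUle hpU_id hpU_id, fun j hj => ?_⟩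
        fin_cases j
        · simp at hj
        · exact mul_le_ker pU pU U V hUle hVle (Or.inr hpU_V)
        · exact mul_le_ker pU pU V U hVle hUle (Or.inl hpU_V)
        · exact mul_le_ker pU pU s1 V hs1le hVle (Or.inl hpU_s1)
        · exact mul_le_ker pU pU s2 V hs2le hVle (Or.inl hpU_s2)
      · refine ⟨PiMap K N pU pV,
          PiMap_id_on pU pV U V hUle hVle hpU_id hpV_id, fun j hj => ?_⟩
        fin_cases j
        · exact mul_le_ker pU pV U U hUle hUle (Or.inr hpV_U)
        · simp at hj
        · exact mul_le_ker pU pV V U hVle hUle (Or.inl hpU_V)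
        · exact mul_le_ker pU pV s1 V hs1le hVle (Or.inl hpU_s1)
        · exact mul_le_ker pU pV s2 V hs2le hVle (Or.inl hpU_s2)
      · refine ⟨PiMap K N pV pU,
          PiMap_id_on pV pU V U hVle hUle hpV_id hpU_id, fun j hj => ?_⟩
        fin_cases j
        · exact mul_le_ker pV pU U U hUle hUle (Or.inl hpV_U)
        · exact mul_le_ker pV pU U V hUle hVle (Or.inl hpV_U)
        · simp at hj
        · exact mul_le_ker pV pU s1 V hs1le hVle (Or.inr hpU_V)
        · exact mul_le_ker pV pU s2 V hs2le hVle (Or.inr hpU_V)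
      · refine ⟨PiMap K N p1 pV,
          PiMap_id_on p1 pV s1 V hs1le hVle hp1_id hpV_id, fun j hj => ?_⟩
        fin_cases j
        · exact mul_le_ker p1 pV U U hUle hUle (Or.inl hp1_U)
        · exact mul_le_ker p1 pV U V hUle hVle (Or.inl hp1_U)
        · exact mul_le_ker p1 pV V U hVle hUle (Or.inr hpV_U)
        · simp at hj
        · exact mul_le_ker p1 pV s2 V hs2le hVle (Or.inl hp1_s2)
      · refine ⟨PiMap K N p2 pV,
          PiMap_id_on p2 pV s2 V hs2le hVle hp2_id hpV_id, fun j hj => ?_⟩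
        fin_cases j
        · exact mul_le_ker p2 pV U U hUle hUle (Or.inl hp2_U)
        · exact mul_le_ker p2 pV U V hUle hVle (Or.inl hp2_U)
        · exact mul_le_ker p2 pV V U hVle hUle (Or.inr hpV_U)
        · exact mul_le_ker p2 pV s1 V hs1le hVle (Or.inl hp2_s1)
        · simp at hj
    obtain ⟨π, hid, hker⟩ := key
    refine Submodule.disjoint_def.mpr fun x hx hx' => ?_
    have h1 : π x = x := hid x hx
    have h2 : π x = 0 := by
      have hle : (⨆ j, ⨆ _ : j ≠ i, F j) ≤ LinearMap.ker π :=
        iSup_le fun j => iSup_le fun hj => hker j hj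
      exact hle hx'
    rw [← h1, h2]
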